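/- If X̂ ∈ ℝ^{n×n} is a symmetric positive semidefinite matrix satisfying X̂ = D(X̂), then every iterate of the fixed point iteration satisfies X_t ⪯ X̂ for all t ≥ 0 (any positive semidefinite solution of the SDARE is an upper bound for the fixed point sequence). -/

import Mathlib

open Matrix
open scoped Kronecker

variable {ι κ μ : Type*} [Fintype ι] [DecidableEq ι] [Fintype κ] [DecidableEq κ]
  [Fintype μ] [DecidableEq μ]

lemma ctr (M : Matrix ι κ ℝ) : Mᴴ = Mᵀ := by
  ext i j; simp [conjTranspose_apply]

lemma kron_psd {n r : ℕ} {P : Matrix (Fin n) (Fin n) ℝ} (hP : P.PosSemidef) :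
    (P ⊗ₖ (1 : Matrix (Fin r) (Fin r) ℝ)).PosSemidef := by
  exact hP.kronecker PosSemidef.one

set_option linter.unusedSectionVars false

section Alg
variable (Z : Matrix ι ι ℝ) (B : Matrix ι μ ℝ) (A : Matrix ι κ ℝ)

lemma M_posdef (hZ : Z.PosSemidef) : (1 + Bᵀ * Z * B).PosDef := by
  have h : (Bᵀ * Z * B).PosSemidef := by
    have := hZ.conjTranspose_mul_mul_same B
    rwa [ctr] at this
  exact Matrix.PosDef.add_posSemidef Matrix.PosDef.one h

lemma M_symm (hZ : Z.PosSemidef) : (1 + Bᵀ * Z * B)ᵀ = 1 + Bᵀ * Z * B := by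
  have hz : Zᵀ = Z := by rw [← ctr]; exact hZ.isHermitian.eq
  simp [transpose_add, transpose_mul, Matrix.mul_assoc, hz]

lemma N_det (hZ : Z.PosSemidef) : IsUnit (1 + B * Bᵀ * Z).det := by
  have h : (1 + B * Bᵀ * Z).det = (1 + Bᵀ * Z * B).det := by
    rw [Matrix.mul_assoc, det_one_add_mul_comm]
  rw [h]
  exact ((M_posdef Z B hZ).isUnit).map detMonoidHom

/-- key contraction fact -/
lemma contr (hZ : Z.PosSemidef) {p : Type*} [Fintype p] (X : Matrix μ p ℝ) :
    (1 + Bᵀ * (Z * B))⁻¹ * (Bᵀ * (Z * (B * X))) = X - (1 + Bᵀ * (Z * B))⁻¹ * X := by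
  have hMdet : IsUnit (1 + Bᵀ * Z * B).det := (M_posdef Z B hZ).isUnit.map detMonoidHom
  have hW : (1 + Bᵀ * Z * B)⁻¹ * (1 + Bᵀ * Z * B) = 1 := nonsing_inv_mul _ hMdet
  have h := congrArg (fun T => T * X) hW
  simp only [Matrix.mul_add, Matrix.add_mul, Matrix.mul_one, Matrix.one_mul,
    Matrix.mul_assoc] at h
  exact eq_sub_of_add_eq' h

/-- push-through identity -/
lemma push (hZ : Z.PosSemidef) :
    Z * (1 + B * Bᵀ * Z)⁻¹ = Z - Z * B * (1 + Bᵀ * Z * B)⁻¹ * (Bᵀ * Z) := by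
  set M := 1 + Bᵀ * Z * B with hM
  have h1 : (Z - Z * B * M⁻¹ * (Bᵀ * Z)) * (1 + B * Bᵀ * Z) = Z := by
    simp only [Matrix.sub_mul, Matrix.mul_add, Matrix.add_mul, Matrix.mul_one,
      Matrix.mul_assoc, hM, contr Z B hZ, Matrix.mul_sub]
    abel
  calc Z * (1 + B * Bᵀ * Z)⁻¹
      = (Z - Z * B * M⁻¹ * (Bᵀ * Z)) * ((1 + B * Bᵀ * Z) * (1 + B * Bᵀ * Z)⁻¹) := by
        rw [← Matrix.mul_assoc, h1]
    _ = Z - Z * B * M⁻¹ * (Bᵀ * Z) := by rw [mul_nonsing_inv _ (N_det Z B hZ), mul_one]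

/-- second contraction fact -/
lemma contr2 (hZ : Z.PosSemidef) {p : Type*} [Fintype p] (X : Matrix μ p ℝ) :
    Bᵀ * (Z * (B * ((1 + Bᵀ * (Z * B))⁻¹ * X))) = X - (1 + Bᵀ * (Z * B))⁻¹ * X := by
  have hMdet : IsUnit (1 + Bᵀ * Z * B).det := (M_posdef Z B hZ).isUnit.map detMonoidHom
  have hW : (1 + Bᵀ * Z * B) * (1 + Bᵀ * Z * B)⁻¹ = 1 := mul_nonsing_inv _ hMdet
  have h := congrArg (fun T => T * X) hW
  simp only [Matrix.mul_add, Matrix.add_mul, Matrix.mul_one, Matrix.one_mul,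
    Matrix.mul_assoc] at h
  exact eq_sub_of_add_eq' h

lemma Winv_symm (hZ : Z.PosSemidef) :
    ((1 + Bᵀ * (Z * B))⁻¹)ᵀ = (1 + Bᵀ * (Z * B))⁻¹ := by
  rw [transpose_nonsing_inv]
  congr 1
  have := M_symm Z B hZ
  simpa [Matrix.mul_assoc] using this

/-- completion of the square -/
lemma sq_id (hZ : Z.PosSemidef) (K : Matrix μ κ ℝ) :
    (A + B * K)ᵀ * Z * (A + B * K) + Kᵀ * K =
    Aᵀ * Z * (1 + B * Bᵀ * Z)⁻¹ * A +
      (K + (1 + Bᵀ * Z * B)⁻¹ * (Bᵀ * Z * A))ᵀ * ((1 + Bᵀ * Z * B) *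
        (K + (1 + Bᵀ * Z * B)⁻¹ * (Bᵀ * Z * A))) := by
  have hZT : Zᵀ = Z := by rw [← ctr]; exact hZ.isHermitian.eq
  have hcore : Aᵀ * Z * (1 + B * Bᵀ * Z)⁻¹ * A
      = Aᵀ * (Z - Z * B * (1 + Bᵀ * Z * B)⁻¹ * (Bᵀ * Z)) * A := by
    rw [Matrix.mul_assoc Aᵀ Z ((1 + B * Bᵀ * Z)⁻¹), push Z B hZ]
  rw [hcore]
  simp only [transpose_add, transpose_mul, transpose_transpose, hZT, Winv_symm Z B hZ,
    Matrix.mul_add, Matrix.add_mul, Matrix.sub_mul, Matrix.mul_sub, Matrix.mul_one,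
    Matrix.one_mul, Matrix.mul_assoc, contr Z B hZ, contr2 Z B hZ]
  abel

end Alg

/-- The SDARE Riccati operator `D(X) = Aᵀ (X ⊗ I_r) (I + B Bᵀ (X ⊗ I_r))⁻¹ A + Cᵀ C`,
with `rn` realized as the index type `Fin n × Fin r`. -/
noncomputable def Dop {n m l r : ℕ}
    (A : Matrix (Fin n × Fin r) (Fin n) ℝ)
    (B : Matrix (Fin n × Fin r) (Fin m) ℝ)
    (C : Matrix (Fin l) (Fin n) ℝ)
    (X : Matrix (Fin n) (Fin n) ℝ) : Matrix (Fin n) (Fin n) ℝ :=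
  Aᵀ * (X ⊗ₖ (1 : Matrix (Fin r) (Fin r) ℝ)) *
      (1 + B * Bᵀ * (X ⊗ₖ (1 : Matrix (Fin r) (Fin r) ℝ)))⁻¹ * A + Cᵀ * C

section DopLemmas
variable {n m l r : ℕ}
  (A : Matrix (Fin n × Fin r) (Fin n) ℝ)
  (B : Matrix (Fin n × Fin r) (Fin m) ℝ)
  (C : Matrix (Fin l) (Fin n) ℝ)

/-- value-function representation of `Dop` at the optimal gain -/
lemma dop_value {X : Matrix (Fin n) (Fin n) ℝ} (hX : X.PosSemidef) :
    ∀ K, K = -((1 + Bᵀ * (X ⊗ₖ (1 : Matrix (Fin r) (Fin r) ℝ)) * B)⁻¹ *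
        (Bᵀ * (X ⊗ₖ (1 : Matrix (Fin r) (Fin r) ℝ)) * A)) →
    Dop A B C X = (A + B * K)ᵀ * (X ⊗ₖ (1 : Matrix (Fin r) (Fin r) ℝ)) * (A + B * K)
      + Kᵀ * K + Cᵀ * C := by
  intro K hK
  set Z := X ⊗ₖ (1 : Matrix (Fin r) (Fin r) ℝ) with hZdef
  have hZ : Z.PosSemidef := kron_psd hX
  have h := sq_id Z B A hZ K
  have hzero : K + (1 + Bᵀ * Z * B)⁻¹ * (Bᵀ * Z * A) = 0 := by
    rw [hK]; exact neg_add_cancel _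
  rw [hzero, Matrix.mul_zero, transpose_zero, Matrix.zero_mul, add_zero] at h
  rw [Dop, ← hZdef, ← h]

lemma dop_psd {X : Matrix (Fin n) (Fin n) ℝ} (hX : X.PosSemidef) :
    (Dop A B C X).PosSemidef := by
  set Z := X ⊗ₖ (1 : Matrix (Fin r) (Fin r) ℝ) with hZdef
  have hZ : Z.PosSemidef := kron_psd hX
  set K := -((1 + Bᵀ * Z * B)⁻¹ * (Bᵀ * Z * A)) with hKdef
  rw [dop_value A B C hX K hKdef]
  have h1 : ((A + B * K)ᵀ * Z * (A + B * K)).PosSemidef := by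
    have := hZ.conjTranspose_mul_mul_same (A + B * K)
    rwa [ctr] at this
  refine PosSemidef.add (PosSemidef.add h1 ?_) ?_
  · have := posSemidef_conjTranspose_mul_self K
    rwa [ctr] at this
  · have := posSemidef_conjTranspose_mul_self C
    rwa [ctr] at this

lemma kron_sub (X Y : Matrix (Fin n) (Fin n) ℝ) :
    (Y - X) ⊗ₖ (1 : Matrix (Fin r) (Fin r) ℝ) =
      Y ⊗ₖ (1 : Matrix (Fin r) (Fin r) ℝ) - X ⊗ₖ (1 : Matrix (Fin r) (Fin r) ℝ) := by
  ext i j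
  simp [kroneckerMap_apply, sub_mul, Matrix.sub_apply]

lemma dop_mono {X Y : Matrix (Fin n) (Fin n) ℝ} (hX : X.PosSemidef)
    (hXY : (Y - X).PosSemidef) :
    (Dop A B C Y - Dop A B C X).PosSemidef := by
  have hY : Y.PosSemidef := by
    have := hXY.add hX; rwa [sub_add_cancel] at this
  set ZX := X ⊗ₖ (1 : Matrix (Fin r) (Fin r) ℝ) with hZXdef
  set ZY := Y ⊗ₖ (1 : Matrix (Fin r) (Fin r) ℝ) with hZYdef
  have hZX : ZX.PosSemidef := kron_psd hX
  have hZsub : (ZY - ZX).PosSemidef := by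
    rw [hZXdef, hZYdef, ← kron_sub]; exact kron_psd hXY
  set K := -((1 + Bᵀ * ZY * B)⁻¹ * (Bᵀ * ZY * A)) with hKdef
  have hEY : Dop A B C Y = (A + B * K)ᵀ * ZY * (A + B * K) + Kᵀ * K + Cᵀ * C :=
    dop_value A B C hY K hKdef
  have hEX := sq_id ZX B A hZX K
  set S := (K + (1 + Bᵀ * ZX * B)⁻¹ * (Bᵀ * ZX * A))ᵀ * ((1 + Bᵀ * ZX * B) *
      (K + (1 + Bᵀ * ZX * B)⁻¹ * (Bᵀ * ZX * A))) with hSdef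
  have hS : S.PosSemidef := by
    have hM := (M_posdef ZX B hZX).posSemidef
    have := hM.conjTranspose_mul_mul_same (K + (1 + Bᵀ * ZX * B)⁻¹ * (Bᵀ * ZX * A))
    rw [ctr] at this
    rwa [hSdef, ← Matrix.mul_assoc]
  have hDX : Dop A B C X = (A + B * K)ᵀ * ZX * (A + B * K) + Kᵀ * K + Cᵀ * C - S := by
    rw [Dop, ← hZXdef]
    rw [show Aᵀ * ZX * (1 + B * Bᵀ * ZX)⁻¹ * A
        = (A + B * K)ᵀ * ZX * (A + B * K) + Kᵀ * K - S from by rw [hEX]; abel]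
    abel
  have hdiff : Dop A B C Y - Dop A B C X
      = (A + B * K)ᵀ * (ZY - ZX) * (A + B * K) + S := by
    rw [hEY, hDX, Matrix.mul_sub, Matrix.sub_mul]
    abel
  rw [hdiff]
  refine PosSemidef.add ?_ hS
  have := hZsub.conjTranspose_mul_mul_same (A + B * K)
  rwa [ctr] at this

end DopLemmas

theorem stmt2 {n m l r : ℕ} (hn : 0 < n) (hm : 0 < m) (hl : 0 < l) (hr : 0 < r)
    (A : Matrix (Fin n × Fin r) (Fin n) ℝ)
    (B : Matrix (Fin n × Fin r) (Fin m) ℝ)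
    (C : Matrix (Fin l) (Fin n) ℝ)
    (Xseq : ℕ → Matrix (Fin n) (Fin n) ℝ)
    (h0 : Xseq 0 = 0)
    (hstep : ∀ t, Xseq (t + 1) = Dop A B C (Xseq t))
    (Xhat : Matrix (Fin n) (Fin n) ℝ)
    (hXhat : Xhat.PosSemidef) (hsol : Xhat = Dop A B C Xhat) :
    ∀ t, (Xhat - Xseq t).PosSemidef := by
  have key : ∀ t, (Xseq t).PosSemidef ∧ (Xhat - Xseq t).PosSemidef := by
    intro t
    induction t with
    | zero => rw [h0, sub_zero]; exact ⟨PosSemidef.zero, hXhat⟩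
    | succ t ih =>
      constructor
      · rw [hstep]; exact dop_psd A B C ih.1
      · rw [hstep, hsol]
        exact dop_mono A B C ih.1 ih.2
  exact fun t => (key t).2
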